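/- Let S be a convex compact subset of ℝ^M and f : ℝ^M → ℝ^M a map that is Lipschitz on S with constant L and satisfies the one-sided Lipschitz condition on S with constant λ < 0, i.e. ⟪f(y₁) − f(y₂), y₁ − y₂⟫ ≤ λ‖y₁ − y₂‖² for all y₁, y₂ ∈ S. Set C = sup_{y∈S} L·‖f(y)‖. Let y₀, z₀ ∈ S with ‖y₀ − z₀‖ ≤ ε, let y : [0,τ] → S solve y′(t) = f(y(t)) with y(0) = y₀, and let ỹ(t) = z₀ + t·f(z₀) be the explicit Euler approximation, assumed to remain in S for t ∈ [0,τ]. Then for all t ∈ [0,τ]: ‖y(t) − ỹ(t)‖ ≤ ( ε²·e^{λt} + (C²/λ²)·( t² + 2t/λ + (2/λ²)·(1 − e^{λt}) ) )^{1/2}. -/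

import Mathlib

open Set Real
open scoped RealInnerProductSpace

/-- Euler error bound for a one-sided Lipschitz vector field with negative
OSL constant `lam < 0` (Proposition 1, case `λ < 0`). -/
theorem euler_error_bound_neg_osl {M : ℕ}
    (S : Set (EuclideanSpace ℝ (Fin M)))
    (hSconv : Convex ℝ S) (hScomp : IsCompact S)
    (f : EuclideanSpace ℝ (Fin M) → EuclideanSpace ℝ (Fin M))
    (L lam C ε τ : ℝ) (hlam : lam < 0)
    (hLip : ∀ y₁ ∈ S, ∀ y₂ ∈ S, ‖f y₁ - f y₂‖ ≤ L * ‖y₁ - y₂‖)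
    (hOSL : ∀ y₁ ∈ S, ∀ y₂ ∈ S,
      ⟪f y₁ - f y₂, y₁ - y₂⟫ ≤ lam * ‖y₁ - y₂‖ ^ 2)
    (hC : IsLUB ((fun y => L * ‖f y‖) '' S) C)
    (y₀ z₀ : EuclideanSpace ℝ (Fin M)) (hy₀S : y₀ ∈ S) (hz₀S : z₀ ∈ S)
    (hyz : ‖y₀ - z₀‖ ≤ ε)
    (y : ℝ → EuclideanSpace ℝ (Fin M))
    (hy0 : y 0 = y₀)
    (hyS : ∀ t ∈ Icc (0 : ℝ) τ, y t ∈ S)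
    (hy' : ∀ t ∈ Icc (0 : ℝ) τ, HasDerivAt y (f (y t)) t)
    (hEulerS : ∀ t ∈ Icc (0 : ℝ) τ, z₀ + t • f z₀ ∈ S) :
    ∀ t ∈ Icc (0 : ℝ) τ,
      ‖y t - (z₀ + t • f z₀)‖ ≤
        Real.sqrt (ε ^ 2 * Real.exp (lam * t) +
          C ^ 2 / lam ^ 2 *
            (t ^ 2 + 2 * t / lam + 2 / lam ^ 2 * (1 - Real.exp (lam * t)))) := by
  have hlamne : lam ≠ 0 := ne_of_lt hlam
  have hCz : L * ‖f z₀‖ ≤ C := hC.1 ⟨z₀, hz₀S, rfl⟩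
  have hε0 : (0:ℝ) ≤ ε := le_trans (norm_nonneg _) hyz
  -- notation
  set ey : ℝ → EuclideanSpace ℝ (Fin M) := fun s => z₀ + s • f z₀ with hey
  set w : ℝ → EuclideanSpace ℝ (Fin M) := fun s => y s - ey s with hwdef
  set E : ℝ → ℝ := fun s => ⟪w s, w s⟫ with hEdef
  set u : ℝ → ℝ := fun s => ε ^ 2 * Real.exp (lam * s) +
      C ^ 2 / lam ^ 2 *
        (s ^ 2 + 2 * s / lam + 2 / lam ^ 2 * (1 - Real.exp (lam * s))) with hudef
  set G : ℝ → ℝ := fun s => Real.exp (-lam * s) * (E s - u s) with hGdef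
  -- derivative of ey
  have hey' : ∀ s : ℝ, HasDerivAt ey (f z₀) s := by
    intro s
    have := ((hasDerivAt_id s).smul_const (f z₀)).const_add z₀
    rw [one_smul] at this
    exact this
  -- derivative of w
  have hw' : ∀ s ∈ Icc (0:ℝ) τ, HasDerivAt w (f (y s) - f z₀) s := fun s hs =>
    (hy' s hs).sub (hey' s)
  -- derivative of E
  have hE' : ∀ s ∈ Icc (0:ℝ) τ,
      HasDerivAt E (2 * ⟪f (y s) - f z₀, w s⟫) s := by
    intro s hs
    have := HasDerivAt.inner ℝ (hw' s hs) (hw' s hs)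
    refine this.congr_deriv ?_
    rw [real_inner_comm]; ring
  -- derivative of u
  have hu' : ∀ s : ℝ, HasDerivAt u (lam * u s - C ^ 2 * s ^ 2 / lam) s := by
    intro s
    have h1 : HasDerivAt (fun s : ℝ => Real.exp (lam * s)) (lam * Real.exp (lam * s)) s := by
      exact ((Real.hasDerivAt_exp (lam * s)).comp s
        ((hasDerivAt_id s).const_mul lam)).congr_deriv (by simp only [mul_one]; ring)
    have h2 := ((h1.const_mul (ε ^ 2)).add
        ((((hasDerivAt_pow 2 s).add
          (((hasDerivAt_id s).const_mul 2).div_const lam)).add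
          (((hasDerivAt_const s 1).sub h1).const_mul (2 / lam ^ 2))).const_mul (C ^ 2 / lam ^ 2)))
    refine h2.congr_deriv ?_
    simp only [hudef, id]
    push_cast
    field_simp
    ring
  -- the key differential inequality
  have hkey : ∀ s ∈ Icc (0:ℝ) τ,
      2 * ⟪f (y s) - f z₀, w s⟫ ≤ lam * E s - C ^ 2 * s ^ 2 / lam := by
    intro s hs
    have hsy : y s ∈ S := hyS s hs
    have hse : ey s ∈ S := hEulerS s hs
    have hosl : ⟪f (y s) - f (ey s), y s - ey s⟫ ≤ lam * ‖y s - ey s‖ ^ 2 :=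
      hOSL _ hsy _ hse
    have hLb : ‖f (ey s) - f z₀‖ ≤ C * s := by
      have h1 : ‖f (ey s) - f z₀‖ ≤ L * ‖ey s - z₀‖ := hLip _ hse _ hz₀S
      have h2 : ‖ey s - z₀‖ = s * ‖f z₀‖ := by
        simp [hey, add_sub_cancel_left, norm_smul, abs_of_nonneg hs.1]
      calc ‖f (ey s) - f z₀‖ ≤ L * (s * ‖f z₀‖) := by rw [← h2]; exact h1
        _ = s * (L * ‖f z₀‖) := by ring
        _ ≤ s * C := by exact mul_le_mul_of_nonneg_left hCz hs.1
        _ = C * s := mul_comm _ _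
    have hcs : ⟪f (ey s) - f z₀, w s⟫ ≤ C * s * ‖w s‖ := by
      calc ⟪f (ey s) - f z₀, w s⟫ ≤ ‖f (ey s) - f z₀‖ * ‖w s‖ :=
            real_inner_le_norm _ _
        _ ≤ C * s * ‖w s‖ := by
            exact mul_le_mul_of_nonneg_right hLb (norm_nonneg _)
    have hsplit : ⟪f (y s) - f z₀, w s⟫ =
        ⟪f (y s) - f (ey s), y s - ey s⟫ + ⟪f (ey s) - f z₀, w s⟫ := by
      rw [hwdef]
      rw [← inner_add_left]
      congr 1
      abel
    have hEeq : E s = ‖w s‖ ^ 2 := real_inner_self_eq_norm_sq _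
    have hns : ‖y s - ey s‖ = ‖w s‖ := rfl
    rw [hsplit, hEeq, hns]
    have hdiv : C ^ 2 * s ^ 2 / lam * lam = C ^ 2 * s ^ 2 := by
      field_simp
    nlinarith [sq_nonneg (lam * ‖w s‖ + C * s), norm_nonneg (w s),
      mul_le_mul_of_nonneg_right hcs (le_of_lt (neg_pos.mpr hlam)),
      sq_nonneg ‖w s‖]
  -- G is antitone on Icc 0 τ
  have hG' : ∀ s ∈ Icc (0:ℝ) τ, HasDerivAt G
      (Real.exp (-lam * s) * ((2 * ⟪f (y s) - f z₀, w s⟫ - (lam * u s - C ^ 2 * s ^ 2 / lam))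
        - lam * (E s - u s))) s := by
    intro s hs
    have hexp : HasDerivAt (fun s : ℝ => Real.exp (-lam * s))
        (-lam * Real.exp (-lam * s)) s := by
      have := ((hasDerivAt_id s).const_mul (-lam)).exp
      simpa [mul_comm] using this
    have := hexp.mul ((hE' s hs).sub (hu' s))
    refine this.congr_deriv ?_
    rw [Pi.sub_apply]
    ring
  have hGanti : AntitoneOn G (Icc 0 τ) := by
    apply antitoneOn_of_deriv_nonpos (convex_Icc 0 τ)
    · exact fun s hs => (hG' s hs).continuousAt.continuousWithinAt
    · intro s hs
      rw [interior_Icc] at hs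
      exact (hG' s (Ioo_subset_Icc_self hs)).differentiableAt.differentiableWithinAt
    · intro s hs
      rw [interior_Icc] at hs
      have hs' := Ioo_subset_Icc_self hs
      rw [(hG' s hs').deriv]
      have h1 := hkey s hs'
      have h2 : Real.exp (-lam * s) > 0 := Real.exp_pos _
      nlinarith [h2.le]
  intro t ht
  have h0τ : (0:ℝ) ∈ Icc (0:ℝ) τ := ⟨le_refl _, le_trans ht.1 ht.2⟩
  have hGt : G t ≤ G 0 := hGanti h0τ ht ht.1
  have hG0 : G 0 ≤ 0 := by
    have hw0 : w 0 = y₀ - z₀ := by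
      simp only [hwdef, hey, hy0, zero_smul, add_zero]
    have hE0 : E 0 = ‖y₀ - z₀‖ ^ 2 := by
      show ⟪w 0, w 0⟫ = _
      rw [hw0, real_inner_self_eq_norm_sq]
    have hu0 : u 0 = ε ^ 2 := by simp [hudef]
    have : ‖y₀ - z₀‖ ^ 2 ≤ ε ^ 2 := by nlinarith [norm_nonneg (y₀ - z₀)]
    simp only [hGdef, mul_zero, Real.exp_zero, one_mul, hE0, hu0]
    linarith
  have hEu : E t ≤ u t := by
    have hle : Real.exp (-lam * t) * (E t - u t) ≤ 0 := le_trans hGt hG0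
    by_contra h
    push_neg at h
    exact absurd hle (not_le.mpr (mul_pos (Real.exp_pos _) (by linarith)))
  have hfin : ‖y t - (z₀ + t • f z₀)‖ = Real.sqrt (E t) := by
    have hEt : E t = ‖y t - (z₀ + t • f z₀)‖ ^ 2 :=
      real_inner_self_eq_norm_sq _
    rw [hEt, Real.sqrt_sq (norm_nonneg _)]
  rw [hfin]
  exact Real.sqrt_le_sqrt hEu
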